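/- Let G and G' be finite abelian groups with gcd(|G|,|G'|) = 1, equipped with tight pairs (D,J) and (D',J') respectively. Then (D ⊗ D', J ⊗ J') is a tight pair on G × G', where (D ⊗ D')(H × H') = D(H) ⊗ D'(H') = {χ ⊗ χ' : χ ∈ D(H), χ' ∈ D'(H')}. -/

import Mathlib

open scoped Classical

/-- The character group of `G`: monoid homomorphisms to `ℂˣ`. -/
abbrev CharGp (G : Type*) [Group G] := G →* ℂˣ

/-- Complex conjugation acting on characters: `χ ↦ χ̄`. -/
noncomputable def charConj {G : Type*} [Group G] (χ : CharGp G) : CharGp G :=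
  (Units.map (starRingEnd ℂ).toMonoidHom).comp χ

/-- Restriction of characters along an inclusion of subgroups: `R_K^H` on elements. -/
def resChar {G : Type*} [Group G] {K H : Subgroup G} (h : K ≤ H) (χ : CharGp H) : CharGp K :=
  χ.comp (Subgroup.inclusion h)

/-- Restriction of a character of `G` itself to a subgroup. -/
def resCharTop {G : Type*} [Group G] (K : Subgroup G) (χ : CharGp G) : CharGp K :=
  χ.comp K.subtype

/-- A transfer system on a finite group `G`: a partial order on subgroups refining
inclusion, closed under conjugation and under intersection-pullback. -/
structure TransferSystem (G : Type*) [Group G] where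
  rel : Subgroup G → Subgroup G → Prop
  le_of_rel : ∀ {K H : Subgroup G}, rel K H → K ≤ H
  refl : ∀ H : Subgroup G, rel H H
  trans : ∀ {K L H : Subgroup G}, rel K L → rel L H → rel K H
  conj : ∀ {K H : Subgroup G} (g : G), rel K H →
    rel (K.map (MulAut.conj g).toMonoidHom) (H.map (MulAut.conj g).toMonoidHom)
  inf_rel : ∀ {K H : Subgroup G} (L : Subgroup G), rel K H → L ≤ H → rel (K ⊓ L) L

/-- A transfer system is saturated if `(K,H) ∈ ℛ` and `K ≤ L ≤ H` imply `(L,H) ∈ ℛ`. -/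
def TransferSystem.Saturated {G : Type*} [Group G] (R : TransferSystem G) : Prop :=
  ∀ ⦃K L H : Subgroup G⦄, R.rel K H → K ≤ L → L ≤ H → R.rel L H

/-- A subgroup `H` is `ℛ`-cofibrant if there is no proper `K < H` with `(K,H) ∈ ℛ`. -/
def TransferSystem.Cofibrant {G : Type*} [Group G] (R : TransferSystem G)
    (H : Subgroup G) : Prop :=
  ¬ ∃ K : Subgroup G, K < H ∧ R.rel K H

/-- `𝒰_G`: subsets of `Ĝ` containing the trivial character and closed under conjugation. -/
def UnivSet (G : Type*) [Group G] : Set (Set (CharGp G)) :=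
  {U | (1 : CharGp G) ∈ U ∧ ∀ χ ∈ U, charConj χ ∈ U}

/-- `Tr(U)`: the relation `{(K,H) : K ≤ H and I_K^H(R_K^G(U)) ⊆ R_H^G(U)}`. -/
def TrRel {G : Type*} [Group G] (U : Set (CharGp G)) (K H : Subgroup G) : Prop :=
  ∃ h : K ≤ H, resChar h ⁻¹' (resCharTop K '' U) ⊆ resCharTop H '' U

/-- The sub-inductor axioms for a family `J_K^H : 𝒫(K̂) → 𝒫(Ĥ)`. -/
structure IsSubInductor {G : Type*} [CommGroup G]
    (J : ∀ K H : Subgroup G, K ≤ H → Set (CharGp K) → Set (CharGp H)) : Prop where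
  conj_comm : ∀ {K H : Subgroup G} (h : K ≤ H) (U : Set (CharGp K)),
    J K H h (charConj '' U) = charConj '' J K H h U
  union_comm : ∀ {K H : Subgroup G} (h : K ≤ H) (s : Set (Set (CharGp K))),
    J K H h (⋃₀ s) = ⋃ U ∈ s, J K H h U
  comp : ∀ {K L H : Subgroup G} (h1 : K ≤ L) (h2 : L ≤ H) (U : Set (CharGp K)),
    J L H h2 (J K L h1 U) = J K H (h1.trans h2) U
  res_cover : ∀ {K H : Subgroup G} (h : K ≤ H) (U : Set (CharGp K)),
    resChar h '' J K H h U = U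
  res_le : ∀ {K L H : Subgroup G} (hK : K ≤ H) (hL : L ≤ H) (U : Set (CharGp L)),
    resChar hK '' J L H hL U ⊆
      J (K ⊓ L) K inf_le_left (resChar (inf_le_right : K ⊓ L ≤ L) '' U)
  one_mem : ∀ {K H : Subgroup G} (h : K ≤ H), (1 : CharGp H) ∈ J K H h {1}

/-- The residue of a sub-inductor: `Res_J(H) = ⋃_{K < H} J_K^H(K̂)`. -/
def resJ {G : Type*} [CommGroup G]
    (J : ∀ K H : Subgroup G, K ≤ H → Set (CharGp K) → Set (CharGp H))
    (H : Subgroup G) : Set (CharGp H) :=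
  ⋃ (K : Subgroup G) (h : K < H), J K H h.le Set.univ

/-- A diagram is `R`-stable if `R_K^H(D(H)) ⊆ D(K)` for all `K ≤ H`. -/
def RStable {G : Type*} [CommGroup G] (D : ∀ H : Subgroup G, Set (CharGp H)) : Prop :=
  ∀ {K H : Subgroup G} (h : K ≤ H), resChar h '' D H ⊆ D K

/-- A tight pair: an `R`-stable conjugation-invariant diagram together with a
sub-inductor satisfying the two non-containment constraints. -/
structure IsTightPair {G : Type*} [CommGroup G]
    (D : ∀ H : Subgroup G, Set (CharGp H))
    (J : ∀ K H : Subgroup G, K ≤ H → Set (CharGp K) → Set (CharGp H)) : Prop where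
  rstable : RStable D
  subind : IsSubInductor J
  conj_inv : ∀ H : Subgroup G, ∀ χ ∈ D H, charConj χ ∈ D H
  ind_not_le : ∀ {K H : Subgroup G} (h : K < H),
    ¬ (resChar h.le ⁻¹' D K ⊆ D H ∪ resJ J H)
  not_res : ∀ H : Subgroup G, ¬ (D H ⊆ resJ J H)

/-- The tensor (external product) of characters of subgroups: `χ ⊗ χ'` is the
character of `H × H'` given by `(h,h') ↦ χ(h)·χ'(h')`. -/
def charTensor {G G' : Type*} [CommGroup G] [CommGroup G']
    {H : Subgroup G} {H' : Subgroup G'} (χ : CharGp H) (χ' : CharGp H') :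
    CharGp (H.prod H') :=
  ((χ.comp (MonoidHom.fst H H')) * (χ'.comp (MonoidHom.snd H H'))).comp
    (Subgroup.prodEquiv H H').toMonoidHom



section CharLayer
variable {G G' : Type*} [CommGroup G] [CommGroup G'] {H K : Subgroup G} {H' K' : Subgroup G'}

lemma charTensor_apply (χ : CharGp H) (χ' : CharGp H') (a : G) (b : G') (h : (a,b) ∈ H.prod H') :
    charTensor χ χ' ⟨(a,b),h⟩ = χ ⟨a,h.1⟩ * χ' ⟨b,h.2⟩ := rfl

def pinl (H : Subgroup G) (H' : Subgroup G') : H →* ↥(H.prod H') :=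
  MonoidHom.mk' (fun a => ⟨(a,1), a.2, one_mem _⟩)
    (fun a b => by ext <;> simp)

def pinr (H : Subgroup G) (H' : Subgroup G') : H' →* ↥(H.prod H') :=
  MonoidHom.mk' (fun b => ⟨(1,b), one_mem _, b.2⟩)
    (fun a b => by ext <;> simp)

def tleft (ξ : CharGp (H.prod H')) : CharGp H := ξ.comp (pinl H H')
def tright (ξ : CharGp (H.prod H')) : CharGp H' := ξ.comp (pinr H H')

@[simp] lemma tleft_tensor (χ : CharGp H) (χ' : CharGp H') : tleft (charTensor χ χ') = χ := by
  refine MonoidHom.ext fun a => ?_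
  show χ a * χ' 1 = χ a
  rw [map_one, mul_one]

@[simp] lemma tright_tensor (χ : CharGp H) (χ' : CharGp H') : tright (charTensor χ χ') = χ' := by
  refine MonoidHom.ext fun b => ?_
  show χ 1 * χ' b = χ' b
  rw [map_one, one_mul]

lemma tensor_tleft_tright (ξ : CharGp (H.prod H')) : charTensor (tleft ξ) (tright ξ) = ξ := by
  refine MonoidHom.ext fun x => ?_
  obtain ⟨⟨a,b⟩,hab⟩ := x
  have key : (⟨(a,1), hab.1, one_mem _⟩ * ⟨(1,b), one_mem _, hab.2⟩ : ↥(H.prod H')) = ⟨(a,b),hab⟩ := by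
    ext <;> simp
  rw [charTensor_apply]
  show ξ (pinl H H' ⟨a,hab.1⟩) * ξ (pinr H H' ⟨b,hab.2⟩) = _
  rw [← map_mul]
  exact congrArg ξ key

lemma tensor_eq_iff {χ ψ : CharGp H} {χ' ψ' : CharGp H'} :
    charTensor χ χ' = charTensor ψ ψ' ↔ χ = ψ ∧ χ' = ψ' := by
  constructor
  · intro h
    exact ⟨by simpa using congrArg tleft h, by simpa using congrArg tright h⟩
  · rintro ⟨rfl, rfl⟩; rfl

@[simp] lemma tensor_one_one : charTensor (1 : CharGp H) (1 : CharGp H') = 1 := by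
  refine MonoidHom.ext fun x => ?_
  obtain ⟨⟨a,b⟩,hab⟩ := x
  rw [charTensor_apply]; simp

lemma conj_tensor (χ : CharGp H) (χ' : CharGp H') :
    charConj (charTensor χ χ') = charTensor (charConj χ) (charConj χ') := by
  refine MonoidHom.ext fun x => ?_
  obtain ⟨⟨a,b⟩,hab⟩ := x
  show (Units.map _) (charTensor χ χ' ⟨(a,b),hab⟩) = _
  rw [charTensor_apply, charTensor_apply, map_mul]
  rfl

@[simp] lemma charConj_charConj {M : Type*} [Group M] (χ : CharGp M) :
    charConj (charConj χ) = χ := by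
  refine MonoidHom.ext fun x => ?_
  show (Units.map _) ((Units.map _) (χ x)) = χ x
  ext
  simp [Units.coe_map]

lemma resChar_self {M : Type*} [Group M] {H : Subgroup M} (h : H ≤ H) (χ : CharGp H) :
    resChar h χ = χ := by
  refine MonoidHom.ext fun x => ?_
  exact congrArg χ (Subtype.ext (Subgroup.coe_inclusion (h := h) x))

lemma resChar_resChar {M : Type*} [Group M] {K L H : Subgroup M} (h1 : K ≤ L) (h2 : L ≤ H)
    (χ : CharGp H) : resChar h1 (resChar h2 χ) = resChar (h1.trans h2) χ := by
  refine MonoidHom.ext fun x => ?_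
  show χ _ = χ _
  refine congrArg χ (Subtype.ext ?_)
  rw [Subgroup.coe_inclusion, Subgroup.coe_inclusion, Subgroup.coe_inclusion]

lemma res_tensor (hK : K ≤ H) (hK' : K' ≤ H') (hp : K.prod K' ≤ H.prod H')
    (χ : CharGp H) (χ' : CharGp H') :
    resChar hp (charTensor χ χ') = charTensor (resChar hK χ) (resChar hK' χ') := by
  refine MonoidHom.ext fun x => ?_
  obtain ⟨⟨a,b⟩,hab⟩ := x
  show charTensor χ χ' (Subgroup.inclusion hp ⟨(a,b),hab⟩) = _
  rw [charTensor_apply]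
  have : Subgroup.inclusion hp (⟨(a,b),hab⟩ : ↥(K.prod K')) = ⟨(a,b), hp hab⟩ :=
    Subtype.ext (Subgroup.coe_inclusion _ _)
  rw [this, charTensor_apply]
  rfl

lemma conj_resChar {M : Type*} [Group M] {K H : Subgroup M} (h : K ≤ H) (χ : CharGp H) :
    resChar h (charConj χ) = charConj (resChar h χ) := rfl

end CharLayer

section SubgroupLayer
variable {G G' : Type*} [CommGroup G] [CommGroup G']

lemma prod_fst_mem {H : Subgroup G} {H' : Subgroup G'} {a : G} {b : G'}
    (h : (a,b) ∈ H.prod H') : a ∈ H := h.1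

lemma prod_eq_self_left (H : Subgroup G) (H' : Subgroup G') {A : Subgroup G} {B : Subgroup G'}
    (h : H.prod H' = A.prod B) : H = A := by
  ext a
  constructor
  · intro ha
    have : (a, (1:G')) ∈ A.prod B := h ▸ ⟨ha, one_mem _⟩
    exact this.1
  · intro ha
    have : (a, (1:G')) ∈ H.prod H' := h.symm ▸ ⟨ha, one_mem _⟩
    exact this.1

lemma prod_eq_self_right (H : Subgroup G) (H' : Subgroup G') {A : Subgroup G} {B : Subgroup G'}
    (h : H.prod H' = A.prod B) : H' = B := by
  ext b
  constructor
  · intro hb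
    have : ((1:G), b) ∈ A.prod B := h ▸ ⟨one_mem _, hb⟩
    exact this.2
  · intro hb
    have : ((1:G), b) ∈ H.prod H' := h.symm ▸ ⟨one_mem _, hb⟩
    exact this.2

lemma prod_inj {H A : Subgroup G} {H' B : Subgroup G'}
    (h : H.prod H' = A.prod B) : H = A ∧ H' = B :=
  ⟨prod_eq_self_left H H' h, prod_eq_self_right H H' h⟩

lemma prod_le_prod_iff {H A : Subgroup G} {H' B : Subgroup G'} :
    H.prod H' ≤ A.prod B ↔ H ≤ A ∧ H' ≤ B := by
  constructor
  · intro h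
    constructor
    · intro a ha; exact (h (show (a,(1:G')) ∈ H.prod H' from ⟨ha, one_mem _⟩)).1
    · intro b hb; exact (h (show ((1:G),b) ∈ H.prod H' from ⟨one_mem _, hb⟩)).2
  · rintro ⟨h1, h2⟩
    exact Subgroup.prod_mono h1 h2

lemma inf_prod_eq {H A : Subgroup G} {H' B : Subgroup G'} :
    (H.prod H') ⊓ (A.prod B) = (H ⊓ A).prod (H' ⊓ B) := by
  ext ⟨a,b⟩
  simp only [Subgroup.mem_inf, Subgroup.mem_prod]
  tauto

/-- coprime decomposition: an element stays in W after killing the second coordinate -/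
lemma mem_left_of_mem [Fintype G] [Fintype G']
    (hcop : Nat.Coprime (Nat.card G) (Nat.card G'))
    {W : Subgroup (G × G')} {a : G} {b : G'} (h : (a,b) ∈ W) : (a, (1:G')) ∈ W := by
  set n := Nat.card G' with hn
  have hdvd : orderOf a ∣ Nat.card G := orderOf_dvd_natCard a
  have hco : Nat.Coprime n (orderOf a) :=
    Nat.Coprime.coprime_dvd_right hdvd hcop.symm
  rcases Nat.lt_or_ge 1 (orderOf a) with hlt | hle
  · obtain ⟨m, -, hm⟩ := Nat.exists_mul_mod_eq_one_of_coprime hco hlt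
    have key : ((a,b) : G × G') ^ (n * m) = (a, 1) := by
      have h1 : a ^ (n * m) = a := by
        conv_rhs => rw [← pow_one a]
        rw [pow_eq_pow_iff_modEq]
        calc n * m ≡ (n * m) % orderOf a [MOD orderOf a] := (Nat.mod_modEq _ _).symm
        _ = 1 := hm
      have h2 : b ^ (n * m) = 1 := by
        rw [mul_comm n m, pow_mul, hn, pow_card_eq_one']
      rw [Prod.pow_mk, h1, h2]
    exact key ▸ pow_mem h (n * m)
  · have h1 : orderOf a = 1 := le_antisymm hle (orderOf_pos a)
    have : a = 1 := orderOf_eq_one_iff.mp h1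
    subst this
    have hb : ((1:G), b) ∈ W := by
      have key : ((1:G), b) ^ Nat.card G' = ((1:G), (1:G')) := by
        rw [Prod.pow_mk, one_pow, pow_card_eq_one']
      have : ((1:G),(1:G')) = (1 : G × G') := rfl
      exact h
    exact (one_mem W : ((1:G),(1:G')) ∈ W)

lemma mem_right_of_mem [Fintype G] [Fintype G']
    (hcop : Nat.Coprime (Nat.card G) (Nat.card G'))
    {W : Subgroup (G × G')} {a : G} {b : G'} (h : (a,b) ∈ W) : ((1:G), b) ∈ W := by
  have := mem_left_of_mem hcop h
  have h2 : ((1:G), b) = (a,(1:G'))⁻¹ * (a,b) := by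
    simp [Prod.ext_iff]
  rw [h2]
  exact mul_mem (inv_mem this) h

lemma subgroup_decomp [Fintype G] [Fintype G']
    (hcop : Nat.Coprime (Nat.card G) (Nat.card G'))
    (W : Subgroup (G × G')) : ∃ (A : Subgroup G) (B : Subgroup G'), W = A.prod B := by
  refine ⟨W.map (MonoidHom.fst G G'), W.map (MonoidHom.snd G G'), ?_⟩
  ext ⟨a,b⟩
  simp only [Subgroup.mem_prod, Subgroup.mem_map, MonoidHom.coe_fst, MonoidHom.coe_snd]
  constructor
  · intro h
    exact ⟨⟨(a,b), h, rfl⟩, ⟨(a,b), h, rfl⟩⟩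
  · rintro ⟨⟨⟨x1,x2⟩, hx, rfl⟩, ⟨⟨y1,y2⟩, hy, rfl⟩⟩
    have h1 := mem_left_of_mem hcop hx
    have h2 := mem_right_of_mem hcop hy
    have : ((x1,x2).1, (y1,y2).2) = (x1, (1:G')) * ((1:G), y2) := by simp
    rw [this]
    exact mul_mem h1 h2

end SubgroupLayer

section JToolkit
variable {M : Type*} [CommGroup M]
  {J : ∀ K H : Subgroup M, K ≤ H → Set (CharGp K) → Set (CharGp H)}

lemma J_mono (hJ : IsSubInductor J) {K H : Subgroup M} (h : K ≤ H)
    {U V : Set (CharGp K)} (hUV : U ⊆ V) : J K H h U ⊆ J K H h V := by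
  have h1 : J K H h (⋃₀ {U, V}) = ⋃ S ∈ ({U, V} : Set (Set (CharGp K))), J K H h S :=
    hJ.union_comm h {U, V}
  rw [Set.sUnion_pair, Set.union_eq_self_of_subset_left hUV] at h1
  rw [h1]
  intro x hx
  exact Set.mem_biUnion (by simp) hx

lemma J_biUnion (hJ : IsSubInductor J) {K H : Subgroup M} (h : K ≤ H) (U : Set (CharGp K)) :
    J K H h U = ⋃ τ ∈ U, J K H h {τ} := by
  have h0 : U = ⋃₀ ((fun τ => ({τ} : Set (CharGp K))) '' U) := by
    ext x; simp
  conv_lhs => rw [h0]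
  rw [hJ.union_comm]
  rw [Set.biUnion_image]

lemma J_self (hJ : IsSubInductor J) {H : Subgroup M} (h : H ≤ H) (U : Set (CharGp H)) :
    J H H h U = U := by
  have := hJ.res_cover h U
  rwa [show resChar h '' J H H h U = J H H h U from by
    rw [show resChar h = id from funext fun χ => resChar_self h χ, Set.image_id]] at this

lemma J_res_singleton (hJ : IsSubInductor J) {K H : Subgroup M} (h : K ≤ H)
    {τ : CharGp K} {σ : CharGp H} (hσ : σ ∈ J K H h {τ}) : resChar h σ = τ := by
  have := hJ.res_cover h {τ}
  have h2 : resChar h σ ∈ resChar h '' J K H h {τ} := Set.mem_image_of_mem _ hσ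
  rw [this] at h2
  exact h2

lemma J_exists_res (hJ : IsSubInductor J) {K H : Subgroup M} (h : K ≤ H) (τ : CharGp K) :
    ∃ σ ∈ J K H h {τ}, resChar h σ = τ := by
  have := hJ.res_cover h {τ}
  have h2 : τ ∈ resChar h '' J K H h {τ} := by rw [this]; rfl
  obtain ⟨σ, hσ, hres⟩ := h2
  exact ⟨σ, hσ, hres⟩

lemma J_conj_singleton (hJ : IsSubInductor J) {K H : Subgroup M} (h : K ≤ H)
    {τ : CharGp K} {σ : CharGp H} (hσ : σ ∈ J K H h {τ}) :
    charConj σ ∈ J K H h {charConj τ} := by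
  have h1 : ({charConj τ} : Set (CharGp K)) = charConj '' {τ} := by
    rw [Set.image_singleton]
  rw [h1, hJ.conj_comm]
  exact Set.mem_image_of_mem _ hσ
end JToolkit

section Tensor
variable {G G' : Type*} [CommGroup G] [CommGroup G']

/-- The tensor diagram. -/
def DDp (D : ∀ H : Subgroup G, Set (CharGp H)) (D' : ∀ H : Subgroup G', Set (CharGp H)) :
    ∀ W : Subgroup (G × G'), Set (CharGp W) := fun W =>
  {ξ | ∃ (A : Subgroup G) (B : Subgroup G') (hW : W = A.prod B) (χ : CharGp A) (χ' : CharGp B),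
    χ ∈ D A ∧ χ' ∈ D' B ∧ ξ = resChar hW.le (charTensor χ χ')}

/-- The tensor sub-inductor. -/
def TT (J : ∀ K H : Subgroup G, K ≤ H → Set (CharGp K) → Set (CharGp H))
    (J' : ∀ K H : Subgroup G', K ≤ H → Set (CharGp K) → Set (CharGp H)) :
    ∀ K H : Subgroup (G × G'), K ≤ H → Set (CharGp K) → Set (CharGp H) := fun K H _ U =>
  {ξ | ∃ (A A' : Subgroup G) (B B' : Subgroup G') (hK : K = A.prod B) (hH : H = A'.prod B')
      (hA : A ≤ A') (hB : B ≤ B') (τ : CharGp A) (τ' : CharGp B)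
      (σ : CharGp A') (σ' : CharGp B'),
    resChar hK.le (charTensor τ τ') ∈ U ∧ σ ∈ J A A' hA {τ} ∧ σ' ∈ J' B B' hB {τ'} ∧
    ξ = resChar hH.le (charTensor σ σ')}

variable {D : ∀ H : Subgroup G, Set (CharGp H)} {D' : ∀ H : Subgroup G', Set (CharGp H)}
  {J : ∀ K H : Subgroup G, K ≤ H → Set (CharGp K) → Set (CharGp H)}
  {J' : ∀ K H : Subgroup G', K ≤ H → Set (CharGp K) → Set (CharGp H)}

lemma mem_DDp_prod {H : Subgroup G} {H' : Subgroup G'} {ξ : CharGp (H.prod H')} :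
    ξ ∈ DDp D D' (H.prod H') ↔
      ∃ (χ : CharGp H) (χ' : CharGp H'), χ ∈ D H ∧ χ' ∈ D' H' ∧ ξ = charTensor χ χ' := by
  constructor
  · rintro ⟨A, B, hW, χ, χ', h1, h2, rfl⟩
    obtain ⟨hH, hH'⟩ := prod_inj hW
    subst hH; subst hH'
    exact ⟨χ, χ', h1, h2, (resChar_self _ _)⟩
  · rintro ⟨χ, χ', h1, h2, rfl⟩
    exact ⟨H, H', rfl, χ, χ', h1, h2, (resChar_self _ _).symm⟩

lemma mem_TT_prod {Kp Hp : Subgroup G} {Kq Hq : Subgroup G'} (hp : Kp ≤ Hp) (hq : Kq ≤ Hq)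
    {h : Kp.prod Kq ≤ Hp.prod Hq} {U : Set (CharGp (Kp.prod Kq))} {ξ : CharGp (Hp.prod Hq)} :
    ξ ∈ TT J J' (Kp.prod Kq) (Hp.prod Hq) h U ↔
      ∃ (τ : CharGp Kp) (τ' : CharGp Kq) (σ : CharGp Hp) (σ' : CharGp Hq),
        charTensor τ τ' ∈ U ∧ σ ∈ J Kp Hp hp {τ} ∧ σ' ∈ J' Kq Hq hq {τ'} ∧
        ξ = charTensor σ σ' := by
  constructor
  · rintro ⟨A, A', B, B', hK, hH, hA, hB, τ, τ', σ, σ', h1, h2, h3, rfl⟩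
    obtain ⟨e1, e2⟩ := prod_inj hK
    subst e1; subst e2
    obtain ⟨e3, e4⟩ := prod_inj hH
    subst e3; subst e4
    rw [resChar_self] at h1
    exact ⟨τ, τ', σ, σ', h1, h2, h3, (resChar_self _ _)⟩
  · rintro ⟨τ, τ', σ, σ', h1, h2, h3, rfl⟩
    exact ⟨Kp, Hp, Kq, Hq, rfl, rfl, hp, hq, τ, τ', σ, σ',
      by rwa [resChar_self], h2, h3, (resChar_self _ _).symm⟩

lemma TT_congr {K K₂ H : Subgroup (G × G')} (e : K = K₂) (h : K ≤ H) (h₂ : K₂ ≤ H)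
    (U : Set (CharGp K)) :
    TT J J' K H h U = TT J J' K₂ H h₂ (resChar e.ge '' U) := by
  subst e
  have : resChar (le_refl K) '' U = U := by
    rw [show resChar (le_refl K) = (id : CharGp K → CharGp K) from
      funext fun χ => resChar_self _ χ, Set.image_id]
  rw [this]
end Tensor

section Main
variable {G G' : Type*} [CommGroup G] [CommGroup G'] [Fintype G] [Fintype G']
  {D : ∀ H : Subgroup G, Set (CharGp H)} {D' : ∀ H : Subgroup G', Set (CharGp H)}
  {J : ∀ K H : Subgroup G, K ≤ H → Set (CharGp K) → Set (CharGp H)}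
  {J' : ∀ K H : Subgroup G', K ≤ H → Set (CharGp K) → Set (CharGp H)}

omit [Fintype G] [Fintype G'] in
lemma prod_lt_prod {A H : Subgroup G} {B H' : Subgroup G'}
    (hA : A ≤ H) (hB : B ≤ H') (hne : A ≠ H ∨ B ≠ H') : A.prod B < H.prod H' :=
  lt_of_le_of_ne (Subgroup.prod_mono hA hB) (fun he => by
    obtain ⟨e1, e2⟩ := prod_inj he
    rcases hne with h | h
    · exact h e1
    · exact h e2)

lemma mem_resJ_TT (hcop : Nat.Coprime (Nat.card G) (Nat.card G'))
    (hJ : IsSubInductor J) (hJ' : IsSubInductor J')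
    (H : Subgroup G) (H' : Subgroup G') (ξ : CharGp (H.prod H')) :
    ξ ∈ resJ (TT J J') (H.prod H') ↔ tleft ξ ∈ resJ J H ∨ tright ξ ∈ resJ J' H' := by
  constructor
  · intro hmem
    rw [resJ, Set.mem_iUnion] at hmem
    obtain ⟨W, hmem⟩ := hmem
    rw [Set.mem_iUnion] at hmem
    obtain ⟨hW, hmem⟩ := hmem
    obtain ⟨A, B, rfl⟩ := subgroup_decomp hcop W
    obtain ⟨hAH, hBH'⟩ := prod_le_prod_iff.mp hW.le
    rw [mem_TT_prod hAH hBH'] at hmem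
    obtain ⟨τ, τ', σ, σ', -, hσ, hσ', rfl⟩ := hmem
    rw [tleft_tensor, tright_tensor]
    by_cases hA : A = H
    · subst hA
      have hBne : B ≠ H' := fun hB => by subst hB; exact hW.ne rfl
      right
      rw [resJ, Set.mem_iUnion]
      exact ⟨B, Set.mem_iUnion.2 ⟨lt_of_le_of_ne hBH' hBne,
        J_mono hJ' _ (Set.subset_univ {τ'}) hσ'⟩⟩
    · left
      rw [resJ, Set.mem_iUnion]
      exact ⟨A, Set.mem_iUnion.2 ⟨lt_of_le_of_ne hAH hA,
        J_mono hJ _ (Set.subset_univ {τ}) hσ⟩⟩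
  · intro hor
    rcases hor with hmem | hmem
    · rw [resJ, Set.mem_iUnion] at hmem
      obtain ⟨A, hmem⟩ := hmem
      rw [Set.mem_iUnion] at hmem
      obtain ⟨hA, hmem⟩ := hmem
      rw [J_biUnion hJ] at hmem
      rw [Set.mem_iUnion₂] at hmem
      obtain ⟨τ, -, hmem⟩ := hmem
      rw [resJ, Set.mem_iUnion]
      refine ⟨A.prod H', Set.mem_iUnion.2 ⟨prod_lt_prod hA.le le_rfl (Or.inl hA.ne), ?_⟩⟩
      rw [mem_TT_prod hA.le le_rfl]
      refine ⟨τ, tright ξ, tleft ξ, tright ξ, Set.mem_univ _, hmem, ?_, ?_⟩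
      · rw [J_self hJ']; rfl
      · exact (tensor_tleft_tright ξ).symm
    · rw [resJ, Set.mem_iUnion] at hmem
      obtain ⟨B, hmem⟩ := hmem
      rw [Set.mem_iUnion] at hmem
      obtain ⟨hB, hmem⟩ := hmem
      rw [J_biUnion hJ'] at hmem
      rw [Set.mem_iUnion₂] at hmem
      obtain ⟨τ', -, hmem⟩ := hmem
      rw [resJ, Set.mem_iUnion]
      refine ⟨H.prod B, Set.mem_iUnion.2 ⟨prod_lt_prod le_rfl hB.le (Or.inr hB.ne), ?_⟩⟩
      rw [mem_TT_prod le_rfl hB.le]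
      refine ⟨tleft ξ, τ', tleft ξ, tright ξ, Set.mem_univ _, ?_, hmem, ?_⟩
      · rw [J_self hJ]; rfl
      · exact (tensor_tleft_tright ξ).symm

lemma mem_conj_image {M : Type*} [Group M] {S : Set (CharGp M)} {ξ : CharGp M} :
    ξ ∈ charConj '' S ↔ charConj ξ ∈ S := by
  constructor
  · rintro ⟨ζ, hζ, rfl⟩; rwa [charConj_charConj]
  · intro h; exact ⟨charConj ξ, h, charConj_charConj ξ⟩

lemma TT_subind (hcop : Nat.Coprime (Nat.card G) (Nat.card G'))
    (hJ : IsSubInductor J) (hJ' : IsSubInductor J') : IsSubInductor (TT J J') := by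
  constructor
  -- conj_comm
  · intro K H h U
    obtain ⟨A, B, rfl⟩ := subgroup_decomp hcop K
    obtain ⟨A', B', rfl⟩ := subgroup_decomp hcop H
    obtain ⟨hA, hB⟩ := prod_le_prod_iff.mp h
    ext ξ
    rw [mem_TT_prod hA hB, mem_conj_image, mem_TT_prod hA hB]
    constructor
    · rintro ⟨τ, τ', σ, σ', h1, h2, h3, rfl⟩
      rw [mem_conj_image] at h1
      rw [conj_tensor] at h1
      refine ⟨charConj τ, charConj τ', charConj σ, charConj σ', h1,
        J_conj_singleton hJ _ h2, J_conj_singleton hJ' _ h3, ?_⟩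
      rw [conj_tensor]
    · rintro ⟨τ, τ', σ, σ', h1, h2, h3, hconj⟩
      refine ⟨charConj τ, charConj τ', charConj σ, charConj σ', ?_,
        J_conj_singleton hJ _ h2, J_conj_singleton hJ' _ h3, ?_⟩
      · rw [mem_conj_image, conj_tensor, charConj_charConj, charConj_charConj]
        exact h1
      · rw [← conj_tensor, ← hconj, charConj_charConj]
  -- union_comm
  · intro K H h s
    obtain ⟨A, B, rfl⟩ := subgroup_decomp hcop K
    obtain ⟨A', B', rfl⟩ := subgroup_decomp hcop H
    obtain ⟨hA, hB⟩ := prod_le_prod_iff.mp h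
    ext ξ
    rw [mem_TT_prod hA hB]
    simp only [Set.mem_iUnion]
    constructor
    · rintro ⟨τ, τ', σ, σ', h1, h2, h3, rfl⟩
      obtain ⟨U, hU, h1⟩ := h1
      exact ⟨U, hU, (mem_TT_prod hA hB).2 ⟨τ, τ', σ, σ', h1, h2, h3, rfl⟩⟩
    · rintro ⟨U, hU, hξ⟩
      rw [mem_TT_prod hA hB] at hξ
      obtain ⟨τ, τ', σ, σ', h1, h2, h3, rfl⟩ := hξ
      exact ⟨τ, τ', σ, σ', ⟨U, hU, h1⟩, h2, h3, rfl⟩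
  -- comp
  · intro K L H h1 h2 U
    obtain ⟨A, B, rfl⟩ := subgroup_decomp hcop K
    obtain ⟨C, E, rfl⟩ := subgroup_decomp hcop L
    obtain ⟨A', B', rfl⟩ := subgroup_decomp hcop H
    obtain ⟨hAC, hBE⟩ := prod_le_prod_iff.mp h1
    obtain ⟨hCA', hEB'⟩ := prod_le_prod_iff.mp h2
    ext ξ
    rw [mem_TT_prod hCA' hEB', mem_TT_prod (hAC.trans hCA') (hBE.trans hEB')]
    constructor
    · rintro ⟨ρ, ρ', σ, σ', hmem, h3, h4, rfl⟩
      rw [mem_TT_prod hAC hBE] at hmem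
      obtain ⟨τ, τ', μ, μ', h5, h6, h7, heq⟩ := hmem
      obtain ⟨e1, e2⟩ := tensor_eq_iff.mp heq
      subst e1; subst e2
      refine ⟨τ, τ', σ, σ', h5, ?_, ?_, rfl⟩
      · rw [← hJ.comp hAC hCA', J_biUnion hJ hCA' (J A C hAC {τ})]
        exact Set.mem_biUnion h6 h3
      · rw [← hJ'.comp hBE hEB', J_biUnion hJ' hEB' (J' B E hBE {τ'})]
        exact Set.mem_biUnion h7 h4
    · rintro ⟨τ, τ', σ, σ', h5, h6, h7, rfl⟩
      rw [← hJ.comp hAC hCA', J_biUnion hJ hCA' (J A C hAC {τ})] at h6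
      rw [← hJ'.comp hBE hEB', J_biUnion hJ' hEB' (J' B E hBE {τ'})] at h7
      rw [Set.mem_iUnion₂] at h6 h7
      obtain ⟨ρ, hρ, h6⟩ := h6
      obtain ⟨ρ', hρ', h7⟩ := h7
      exact ⟨ρ, ρ', σ, σ',
        (mem_TT_prod hAC hBE).2 ⟨τ, τ', ρ, ρ', h5, hρ, hρ', rfl⟩, h6, h7, rfl⟩
  -- res_cover
  · intro K H h U
    obtain ⟨A, B, rfl⟩ := subgroup_decomp hcop K
    obtain ⟨A', B', rfl⟩ := subgroup_decomp hcop H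
    obtain ⟨hA, hB⟩ := prod_le_prod_iff.mp h
    ext ξ
    constructor
    · rintro ⟨ζ, hζ, rfl⟩
      rw [mem_TT_prod hA hB] at hζ
      obtain ⟨τ, τ', σ, σ', h1, h2, h3, rfl⟩ := hζ
      rw [res_tensor hA hB, J_res_singleton hJ hA h2, J_res_singleton hJ' hB h3]
      exact h1
    · intro hξ
      obtain ⟨σ, hσ, hres⟩ := J_exists_res hJ hA (tleft ξ)
      obtain ⟨σ', hσ', hres'⟩ := J_exists_res hJ' hB (tright ξ)
      refine ⟨charTensor σ σ', (mem_TT_prod hA hB).2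
        ⟨tleft ξ, tright ξ, σ, σ', by rwa [tensor_tleft_tright], hσ, hσ', rfl⟩, ?_⟩
      rw [res_tensor hA hB, hres, hres', tensor_tleft_tright]
  -- res_le
  · intro K L H hK hL U
    obtain ⟨A, B, rfl⟩ := subgroup_decomp hcop K
    obtain ⟨C, E, rfl⟩ := subgroup_decomp hcop L
    obtain ⟨A', B', rfl⟩ := subgroup_decomp hcop H
    obtain ⟨hAA', hBB'⟩ := prod_le_prod_iff.mp hK
    obtain ⟨hCA', hEB'⟩ := prod_le_prod_iff.mp hL
    rw [TT_congr (inf_prod_eq : (A.prod B) ⊓ (C.prod E) = (A ⊓ C).prod (B ⊓ E))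
      inf_le_left ((inf_prod_eq (H := A) (A := C) (H' := B) (B := E)).ge.trans inf_le_left)]
    rintro ξ ⟨ζ, hζ, rfl⟩
    rw [mem_TT_prod hCA' hEB'] at hζ
    obtain ⟨τ, τ', σ, σ', h1, h2, h3, rfl⟩ := hζ
    rw [mem_TT_prod (inf_le_left : A ⊓ C ≤ A) (inf_le_left : B ⊓ E ≤ B)]
    refine ⟨resChar (inf_le_right : A ⊓ C ≤ C) τ, resChar (inf_le_right : B ⊓ E ≤ E) τ',
      resChar hAA' σ, resChar hBB' σ', ?_, ?_, ?_, res_tensor hAA' hBB' hK σ σ'⟩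
    · refine ⟨resChar (inf_le_right : (A.prod B) ⊓ (C.prod E) ≤ C.prod E) (charTensor τ τ'),
        Set.mem_image_of_mem _ h1, ?_⟩
      rw [resChar_resChar, res_tensor inf_le_right inf_le_right]
    · have := hJ.res_le hAA' hCA' ({τ} : Set (CharGp C))
      have h4 : resChar hAA' σ ∈ resChar hAA' '' J C A' hCA' {τ} := Set.mem_image_of_mem _ h2
      have h5 := this h4
      rwa [Set.image_singleton] at h5
    · have := hJ'.res_le hBB' hEB' ({τ'} : Set (CharGp E))
      have h4 : resChar hBB' σ' ∈ resChar hBB' '' J' E B' hEB' {τ'} := Set.mem_image_of_mem _ h3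
      have h5 := this h4
      rwa [Set.image_singleton] at h5
  -- one_mem
  · intro K H h
    obtain ⟨A, B, rfl⟩ := subgroup_decomp hcop K
    obtain ⟨A', B', rfl⟩ := subgroup_decomp hcop H
    obtain ⟨hA, hB⟩ := prod_le_prod_iff.mp h
    rw [mem_TT_prod hA hB]
    exact ⟨1, 1, 1, 1, by rw [tensor_one_one]; rfl, hJ.one_mem hA, hJ'.one_mem hB,
      tensor_one_one.symm⟩
end Main

section Final
variable {G G' : Type*} [CommGroup G] [CommGroup G'] [Fintype G] [Fintype G']
  {D : ∀ H : Subgroup G, Set (CharGp H)} {D' : ∀ H : Subgroup G', Set (CharGp H)}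
  {J : ∀ K H : Subgroup G, K ≤ H → Set (CharGp K) → Set (CharGp H)}
  {J' : ∀ K H : Subgroup G', K ≤ H → Set (CharGp K) → Set (CharGp H)}

omit [Fintype G] [Fintype G'] in
lemma pick_char {M : Type*} [CommGroup M] {D : ∀ H : Subgroup M, Set (CharGp H)}
    {J : ∀ K H : Subgroup M, K ≤ H → Set (CharGp K) → Set (CharGp H)}
    (hDJ : IsTightPair D J) {K H : Subgroup M} (hKH : K ≤ H) :
    ∃ χ : CharGp H, resChar hKH χ ∈ D K ∧ χ ∉ resJ J H ∧ (K ≠ H → χ ∉ D H) := by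
  by_cases he : K = H
  · subst he
    obtain ⟨χ, h1, h2⟩ := Set.not_subset.mp (hDJ.not_res K)
    exact ⟨χ, by rwa [resChar_self], h2, fun hne => absurd rfl hne⟩
  · obtain ⟨χ, h1, h2⟩ := Set.not_subset.mp (hDJ.ind_not_le (lt_of_le_of_ne hKH he))
    rw [Set.mem_union] at h2
    push_neg at h2
    exact ⟨χ, h1, h2.2, fun _ => h2.1⟩

lemma tensor_tight (hcop : Nat.Coprime (Nat.card G) (Nat.card G'))
    (hDJ : IsTightPair D J) (hDJ' : IsTightPair D' J') :
    IsTightPair (DDp D D') (TT J J') := by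
  constructor
  -- rstable
  · intro K H h
    obtain ⟨A, B, rfl⟩ := subgroup_decomp hcop K
    obtain ⟨A', B', rfl⟩ := subgroup_decomp hcop H
    obtain ⟨hA, hB⟩ := prod_le_prod_iff.mp h
    rintro ξ ⟨ζ, hζ, rfl⟩
    rw [mem_DDp_prod] at hζ
    obtain ⟨χ, χ', h1, h2, rfl⟩ := hζ
    rw [res_tensor hA hB]
    exact mem_DDp_prod.2 ⟨resChar hA χ, resChar hB χ',
      hDJ.rstable hA (Set.mem_image_of_mem _ h1),
      hDJ'.rstable hB (Set.mem_image_of_mem _ h2), rfl⟩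
  -- subind
  · exact TT_subind hcop hDJ.subind hDJ'.subind
  -- conj_inv
  · intro H ξ hξ
    obtain ⟨A, B, rfl⟩ := subgroup_decomp hcop H
    rw [mem_DDp_prod] at hξ ⊢
    obtain ⟨χ, χ', h1, h2, rfl⟩ := hξ
    exact ⟨charConj χ, charConj χ', hDJ.conj_inv A χ h1, hDJ'.conj_inv B χ' h2,
      conj_tensor χ χ'⟩
  -- ind_not_le
  · intro K H h
    obtain ⟨A, B, rfl⟩ := subgroup_decomp hcop K
    obtain ⟨A', B', rfl⟩ := subgroup_decomp hcop H
    obtain ⟨hA, hB⟩ := prod_le_prod_iff.mp h.le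
    have hne : A ≠ A' ∨ B ≠ B' := by
      by_contra hcon
      push_neg at hcon
      obtain ⟨e1, e2⟩ := hcon
      subst e1; subst e2
      exact h.ne rfl
    obtain ⟨χ, hres, hnr, hnD⟩ := pick_char hDJ hA
    obtain ⟨χ', hres', hnr', hnD'⟩ := pick_char hDJ' hB
    refine Set.not_subset.mpr ⟨charTensor χ χ', ?_, ?_⟩
    · show resChar h.le (charTensor χ χ') ∈ DDp D D' ((A.prod B))
      rw [res_tensor hA hB]
      exact mem_DDp_prod.2 ⟨resChar hA χ, resChar hB χ', hres, hres', rfl⟩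
    · rintro (hD | hR)
      · rw [mem_DDp_prod] at hD
        obtain ⟨ψ, ψ', p1, p2, heq⟩ := hD
        obtain ⟨e1, e2⟩ := tensor_eq_iff.mp heq
        subst e1; subst e2
        rcases hne with hn | hn
        · exact hnD hn p1
        · exact hnD' hn p2
      · rcases (mem_resJ_TT hcop hDJ.subind hDJ'.subind A' B' _).mp hR with hr | hr
        · rw [tleft_tensor] at hr; exact hnr hr
        · rw [tright_tensor] at hr; exact hnr' hr
  -- not_res
  · intro H
    obtain ⟨A, B, rfl⟩ := subgroup_decomp hcop H
    obtain ⟨χ, hres, hnr, -⟩ := pick_char hDJ (le_refl A)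
    obtain ⟨χ', hres', hnr', -⟩ := pick_char hDJ' (le_refl B)
    rw [resChar_self] at hres hres'
    refine Set.not_subset.mpr ⟨charTensor χ χ', mem_DDp_prod.2 ⟨χ, χ', hres, hres', rfl⟩, ?_⟩
    intro hR
    rcases (mem_resJ_TT hcop hDJ.subind hDJ'.subind A B _).mp hR with hr | hr
    · rw [tleft_tensor] at hr; exact hnr hr
    · rw [tright_tensor] at hr; exact hnr' hr
end Final


/-- **Lemma (localization of tight pairs).** If `G`, `G'` are finite abelian groups
of coprime orders equipped with tight pairs `(D,J)` and `(D',J')`, then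
`(D ⊗ D', J ⊗ J')` is a tight pair on `G × G'`, where
`(D ⊗ D')(H×H') = {χ ⊗ χ' : χ ∈ D(H), χ' ∈ D'(H')}` and `J ⊗ J'` is determined on
subgroups `K×K' ≤ H×H'` by `(J⊗J')({τ⊗τ'}) = J({τ}) ⊗ J'({τ'})` on singletons,
extended by unions. -/
theorem tensor_tight_pair (G G' : Type*) [CommGroup G] [Fintype G]
    [CommGroup G'] [Fintype G']
    (hcop : Nat.Coprime (Nat.card G) (Nat.card G'))
    (D : ∀ H : Subgroup G, Set (CharGp H))
    (J : ∀ K H : Subgroup G, K ≤ H → Set (CharGp K) → Set (CharGp H))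
    (hDJ : IsTightPair D J)
    (D' : ∀ H : Subgroup G', Set (CharGp H))
    (J' : ∀ K H : Subgroup G', K ≤ H → Set (CharGp K) → Set (CharGp H))
    (hDJ' : IsTightPair D' J') :
    ∃ (DD : ∀ W : Subgroup (G × G'), Set (CharGp W))
      (T : ∀ K H : Subgroup (G × G'), K ≤ H → Set (CharGp K) → Set (CharGp H)),
      (∀ (H : Subgroup G) (H' : Subgroup G'),
        DD (H.prod H') =
          {ξ | ∃ (χ : CharGp H) (χ' : CharGp H'), χ ∈ D H ∧ χ' ∈ D' H' ∧
            ξ = charTensor χ χ'}) ∧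
      (∀ (K H : Subgroup G) (K' H' : Subgroup G') (hK : K ≤ H) (hK' : K' ≤ H')
        (hP : K.prod K' ≤ H.prod H') (U : Set (CharGp (K.prod K'))),
        T (K.prod K') (H.prod H') hP U =
          {ξ | ∃ (τ : CharGp K) (τ' : CharGp K') (σ : CharGp H) (σ' : CharGp H'),
            charTensor τ τ' ∈ U ∧ σ ∈ J K H hK {τ} ∧ σ' ∈ J' K' H' hK' {τ'} ∧
            ξ = charTensor σ σ'}) ∧
      IsTightPair DD T := by
  refine ⟨DDp D D', TT J J', fun H H' => Set.ext fun ξ => mem_DDp_prod,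
    fun K H K' H' hK hK' hP U => Set.ext fun ξ => mem_TT_prod hK hK',
    tensor_tight hcop hDJ hDJ'⟩
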